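/- Let (O, 𝔪) be a commutative reduced local ring, let K be its total ring of fractions (the localization of O at the multiplicative set of nonzerodivisors), and let Ō be the integral closure of O in K; identify O with its image in Ō. Then 𝔪Ō ∩ O = 𝔪, and, with lengths taken in ℕ∞, length_O(Ō/𝔪Ō) = length_O(Ō/(𝔪Ō + O)) + 1, where 𝔪Ō + O is the O-submodule of Ō generated by 𝔪Ō and the image of O. (For the local ring of a reduced curve germ this says dim Ō/(𝔪Ō + O) = |m| − 1, where |m| = dim Ō/𝔪Ō is the multiplicity.) -/

import Mathlib

set_option maxHeartbeats 1000000


/-- The length of an `R`-module `M`: the supremum of the lengths of strictly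
increasing chains of submodules of `M`, valued in `ℕ∞`. -/
noncomputable def moduleLength (R M : Type*) [Ring R] [AddCommGroup M] [Module R M] : ℕ∞ :=
  ⨆ p : LTSeries (Submodule R M), (p.length : ℕ∞)

noncomputable def chainLength (α : Type*) [Preorder α] : ℕ∞ :=
  ⨆ p : LTSeries α, (p.length : ℕ∞)

lemma chainLength_eq_of_orderIso {α β : Type*} [Preorder α] [Preorder β] (e : α ≃o β) :
    chainLength α = chainLength β :=
  le_antisymm (iSup_le fun p => le_iSup_of_le (p.map e e.strictMono) (by simp))
    (iSup_le fun p => le_iSup_of_le (p.map e.symm e.symm.strictMono) (by simp))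


lemma sup_atom_lt {α : Type*} [Lattice α] {a x y : α} (hax : a ≤ x) (hxy : x < y) :
    x ⊔ a < y ⊔ a := by
  rwa [sup_eq_left.mpr hax, sup_eq_left.mpr (hax.trans hxy.le)]

lemma atom_le_of_sup_eq {α : Type*} [Lattice α] [OrderBot α] [IsModularLattice α]
    {a x y : α} (ha : IsAtom a) (hxy : x < y) (h : x ⊔ a = y ⊔ a) : a ≤ y := by
  have h1 : y ≤ x ⊔ a := h ▸ le_sup_left
  have h3 : y = x ⊔ a ⊓ y := by
    rw [← sup_inf_assoc_of_le a hxy.le, inf_eq_right.mpr h1]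
  rcases ha.le_iff.mp (inf_le_left : a ⊓ y ≤ a) with h4 | h4
  · rw [h4, sup_bot_eq] at h3
    exact absurd h3.symm hxy.ne
  · exact h4 ▸ inf_le_right

lemma chainLength_eq_add_one_of_isAtom {α : Type*} [Lattice α] [OrderBot α] [IsModularLattice α]
    {a : α} (ha : IsAtom a) :
    chainLength α = chainLength {x : α // a ≤ x} + 1 := by
  classical
  haveI : Nonempty (LTSeries {x : α // a ≤ x}) := ⟨RelSeries.singleton _ ⟨a, le_rfl⟩⟩
  apply le_antisymm
  · refine iSup_le fun p => ?_
    set n := p.length with hn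
    by_cases hc : ∃ k : ℕ, ∃ hk : k + 1 ≤ n,
        p ⟨k, by omega⟩ ⊔ a = p ⟨k + 1, by omega⟩ ⊔ a
    · obtain ⟨hk1, hkeq⟩ := Nat.find_spec hc
      set i := Nat.find hc with hidef
      have hmin : ∀ k, k < i → ∀ hk : k + 1 ≤ n,
          p ⟨k, by omega⟩ ⊔ a ≠ p ⟨k + 1, by omega⟩ ⊔ a := by
        intro k hki hk h
        exact Nat.find_min hc hki ⟨hk, h⟩
      have hi1 : i + 1 ≤ n := hk1
      have hale : a ≤ p ⟨i + 1, by omega⟩ :=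
        atom_le_of_sup_eq ha (p.strictMono (Fin.mk_lt_mk.mpr (by omega))) hkeq
      have hn1 : 1 ≤ n := by omega
      set g : Fin (n - 1 + 1) → {x : α // a ≤ x} := fun j =>
        ⟨p (if (j : ℕ) ≤ i then (⟨(j : ℕ), by have := j.isLt; omega⟩ : Fin (n + 1))
            else ⟨(j : ℕ) + 1, by have := j.isLt; omega⟩) ⊔ a, le_sup_right⟩ with hg
      have hgmono : StrictMono g := by
        rw [Fin.strictMono_iff_lt_succ]
        intro j
        have hj : (j : ℕ) < n - 1 := j.isLt
        simp only [hg, Fin.coe_castSucc, Fin.val_succ, Subtype.mk_lt_mk]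
        by_cases h1 : (j : ℕ) + 1 ≤ i
        · rw [if_pos (by omega : (j : ℕ) ≤ i), if_pos h1]
          exact lt_of_le_of_ne
            (sup_le_sup_right (p.monotone (Fin.mk_le_mk.mpr (by omega))) a)
            (hmin (j : ℕ) (by omega) (by omega))
        · by_cases h2 : (j : ℕ) ≤ i
          · rw [if_pos h2, if_neg h1]
            have hji : (j : ℕ) = i := by omega
            calc p ⟨(j : ℕ), by omega⟩ ⊔ a = p ⟨i + 1, by omega⟩ ⊔ a := by
                  simp only [hji]; exact hkeq
              _ < p ⟨(j : ℕ) + 1 + 1, by omega⟩ ⊔ a :=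
                  sup_atom_lt hale (p.strictMono (Fin.mk_lt_mk.mpr (by omega)))
          · rw [if_neg h2, if_neg (by omega : ¬ (j : ℕ) + 1 ≤ i)]
            exact sup_atom_lt
              (hale.trans (p.monotone (Fin.mk_le_mk.mpr (by omega))))
              (p.strictMono (Fin.mk_lt_mk.mpr (by omega)))
      have hle := le_iSup (fun q : LTSeries {x : α // a ≤ x} => (q.length : ℕ∞))
        (LTSeries.mk (n - 1) g hgmono)
      calc (p.length : ℕ∞) = ((n - 1 : ℕ) : ℕ∞) + 1 := by
            rw [← hn]; norm_cast; omega
        _ ≤ chainLength {x : α // a ≤ x} + 1 := by gcongr; exact hle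
    · push_neg at hc
      have hgmono : StrictMono (fun j : Fin (n + 1) =>
          (⟨p j ⊔ a, le_sup_right⟩ : {x : α // a ≤ x})) := by
        rw [Fin.strictMono_iff_lt_succ]
        intro j
        rw [Subtype.mk_lt_mk]
        refine lt_of_le_of_ne (sup_le_sup_right (p.monotone j.castSucc_lt_succ.le) a) ?_
        have h := hc (j : ℕ) (by omega)
        have e1 : j.castSucc = (⟨(j : ℕ), by omega⟩ : Fin (n + 1)) := rfl
        have e2 : j.succ = (⟨(j : ℕ) + 1, by omega⟩ : Fin (n + 1)) := rfl
        rw [e1, e2]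
        exact h
      have hle := le_iSup (fun q : LTSeries {x : α // a ≤ x} => (q.length : ℕ∞))
        (LTSeries.mk n _ hgmono)
      exact le_trans (show (n : ℕ∞) ≤ chainLength {x : α // a ≤ x} from hle) le_self_add
  · unfold chainLength
    rw [ENat.iSup_add]
    refine iSup_le fun q => ?_
    have hval : StrictMono (Subtype.val : {x : α // a ≤ x} → α) := fun _ _ h => h
    have hlt : (⊥ : α) < (q.map Subtype.val hval).head := by
      rw [LTSeries.head_map]
      exact bot_lt_iff_ne_bot.mpr fun h => ha.1 (le_bot_iff.mp (h ▸ q.head.2))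
    have hle := le_iSup (fun p : LTSeries α => (p.length : ℕ∞))
      ((q.map Subtype.val hval).cons ⊥ hlt)
    have hl : ((q.map Subtype.val hval).cons ⊥ hlt).length = q.length + 1 := by
      show 0 + q.length + 1 = q.length + 1; omega
    have hle' : ((q.length + 1 : ℕ) : ℕ∞) ≤ ⨆ p : LTSeries α, (p.length : ℕ∞) := by
      rw [← hl]; exact hle
    exact_mod_cast hle'

/-- for a reduced local ring `(O, 𝔪)` with total ring of fractions `K`
and integral closure `Ō = integralClosure O K`, one has `𝔪Ō ∩ O = 𝔪` (expressed via
contraction of the extension of `𝔪` to `Ō`), and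
`length_O(Ō/𝔪Ō) = length_O(Ō/(𝔪Ō + O)) + 1` in `ℕ∞`. -/
theorem maximalIdeal_extension_contraction_and_length
    (O : Type*) [CommRing O] [IsLocalRing O] [IsReduced O]
    (K : Type*) [CommRing K] [Algebra O K] [IsFractionRing O K]
    (OA : Submodule O ↥(integralClosure O K))
    (hOA : OA = LinearMap.range (Algebra.linearMap O ↥(integralClosure O K))) :
    Ideal.comap (algebraMap O ↥(integralClosure O K))
        (Ideal.map (algebraMap O ↥(integralClosure O K)) (IsLocalRing.maximalIdeal O)) =
      IsLocalRing.maximalIdeal O ∧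
    moduleLength O
        (↥(integralClosure O K) ⧸
          (Ideal.map (algebraMap O ↥(integralClosure O K))
            (IsLocalRing.maximalIdeal O)).restrictScalars O) =
      moduleLength O
          (↥(integralClosure O K) ⧸
            ((Ideal.map (algebraMap O ↥(integralClosure O K))
              (IsLocalRing.maximalIdeal O)).restrictScalars O ⊔ OA)) + 1 := by
  classical
  set f := algebraMap O ↥(integralClosure O K) with hf
  have hinj : Function.Injective f := by
    intro a b h
    exact IsFractionRing.injective O K (congrArg Subtype.val h)
  obtain ⟨Q, hQmax, hQc⟩ :=
    Ideal.exists_ideal_over_maximal_of_isIntegral (S := ↥(integralClosure O K))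
      (IsLocalRing.maximalIdeal O)
      (by rw [(RingHom.injective_iff_ker_eq_bot f).mp hinj]; exact bot_le)
  have hmapne : Ideal.map f (IsLocalRing.maximalIdeal O) ≠ ⊤ := by
    intro h
    have hle : Ideal.map f (IsLocalRing.maximalIdeal O) ≤ Q :=
      Ideal.map_le_iff_le_comap.mpr hQc.ge
    exact hQmax.ne_top (top_le_iff.mp (h ▸ hle))
  have hcomap : Ideal.comap f (Ideal.map f (IsLocalRing.maximalIdeal O)) =
      IsLocalRing.maximalIdeal O := by
    refine le_antisymm (IsLocalRing.le_maximalIdeal ?_) Ideal.le_comap_map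
    intro h
    have h1 : (1 : O) ∈ Ideal.comap f (Ideal.map f (IsLocalRing.maximalIdeal O)) :=
      h ▸ Submodule.mem_top
    have h2 := Ideal.mem_comap.mp h1
    rw [map_one] at h2
    exact hmapne ((Ideal.eq_top_iff_one _).mpr h2)
  refine ⟨hcomap, ?_⟩
  set S : Submodule O ↥(integralClosure O K) :=
    (Ideal.map f (IsLocalRing.maximalIdeal O)).restrictScalars O with hS
  set T : Submodule O ↥(integralClosure O K) := S ⊔ OA with hT
  set N : Submodule O (↥(integralClosure O K) ⧸ S) := T.map S.mkQ with hNdef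
  have hmk : ∀ o : O, S.mkQ (f o) = 0 ↔ o ∈ IsLocalRing.maximalIdeal O := by
    intro o
    rw [Submodule.mkQ_apply, Submodule.Quotient.mk_eq_zero]
    change f o ∈ Ideal.map f (IsLocalRing.maximalIdeal O) ↔ _
    rw [← Ideal.mem_comap, hcomap]
  have hmemN : ∀ x : ↥(integralClosure O K) ⧸ S, x ∈ N ↔ ∃ o : O, S.mkQ (f o) = x := by
    intro x
    constructor
    · intro hx
      obtain ⟨y, hy, rfl⟩ := Submodule.mem_map.mp hx
      rw [hT, Submodule.mem_sup] at hy
      obtain ⟨s, hs, z, hz, rfl⟩ := hy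
      rw [hOA, LinearMap.mem_range] at hz
      obtain ⟨o, rfl⟩ := hz
      refine ⟨o, ?_⟩
      have hs0 : S.mkQ s = 0 := by
        rw [Submodule.mkQ_apply, Submodule.Quotient.mk_eq_zero]; exact hs
      rw [map_add, hs0, zero_add]
      rfl
    · rintro ⟨o, rfl⟩
      refine Submodule.mem_map_of_mem ?_
      rw [hT]
      exact Submodule.mem_sup_right (by rw [hOA]; exact ⟨o, rfl⟩)
  have honene : S.mkQ (f 1) ≠ 0 := fun h =>
    (IsLocalRing.maximalIdeal.isMaximal O).ne_top
      ((Ideal.eq_top_iff_one _).mpr ((hmk 1).mp h))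
  have hatom : IsAtom N := by
    constructor
    · intro h
      have hone : S.mkQ (f 1) ∈ N := (hmemN _).mpr ⟨1, rfl⟩
      rw [h, Submodule.mem_bot] at hone
      exact honene hone
    · intro W hW
      by_contra hWne
      obtain ⟨x, hxW, hx0⟩ := (Submodule.ne_bot_iff W).mp hWne
      obtain ⟨o, rfl⟩ := (hmemN x).mp (hW.le hxW)
      have ho : o ∉ IsLocalRing.maximalIdeal O := fun h => hx0 ((hmk o).mpr h)
      have hu : IsUnit o := by
        by_contra h
        exact ho ((IsLocalRing.mem_maximalIdeal o).mpr h)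
      obtain ⟨u, hu⟩ := hu
      apply hW.not_ge
      intro y hy
      obtain ⟨o', rfl⟩ := (hmemN y).mp hy
      have key : S.mkQ (f o') = (o' * ↑u⁻¹) • S.mkQ (f o) := by
        rw [← map_smul, Algebra.smul_def, ← hf, ← map_mul, mul_assoc, ← hu,
          Units.inv_mul, mul_one]
      exact key ▸ W.smul_mem _ hxW
  have e2 : ((↥(integralClosure O K) ⧸ S) ⧸ N) ≃ₗ[O] ↥(integralClosure O K) ⧸ T :=
    Submodule.quotientQuotientEquivQuotient S T le_sup_left
  calc moduleLength O (↥(integralClosure O K) ⧸ S)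
      = chainLength (Submodule O (↥(integralClosure O K) ⧸ S)) := rfl
    _ = chainLength {x : Submodule O (↥(integralClosure O K) ⧸ S) // N ≤ x} + 1 :=
        chainLength_eq_add_one_of_isAtom hatom
    _ = chainLength (Submodule O ((↥(integralClosure O K) ⧸ S) ⧸ N)) + 1 := by
        rw [chainLength_eq_of_orderIso (Submodule.comapMkQRelIso N)]; rfl
    _ = chainLength (Submodule O (↥(integralClosure O K) ⧸ T)) + 1 := by
        rw [chainLength_eq_of_orderIso (Submodule.orderIsoMapComap e2)]
    _ = moduleLength O (↥(integralClosure O K) ⧸ T) + 1 := rfl
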